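/- For every integer k ≥ 1 and every permutation π of {1,…,k}, the table-order Markov chain satisfies P(σ_k = π) = (θ/α)^{R(π)} / [θ/α]_k, where R(π) is the number of record values of π and [x]_k = x(x+1)⋯(x+k−1). -/
import Mathlib


/-- Rising factorial `[x]_k = x (x+1) ⋯ (x+k-1)`, with `[x]_0 = 1`. -/
noncomputable def risingFactorial (x : ℝ) : ℕ → ℝ
  | 0 => 1
  | n + 1 => risingFactorial x n * (x + n)

/-- Number of record values of a permutation `π` of `{0,…,k−1}`:
`R(π) = #{ j : π(i) < π(j) for all i < j }`. -/
def numRecords {k : ℕ} (π : Equiv.Perm (Fin k)) : ℕ :=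
  (Finset.univ.filter fun j : Fin k => ∀ i, i < j → π i < π j).card

/-- The law of the table-order Markov chain `(σ_k, k ≥ 1)` with parameters `(α, θ)`:
`σ₁` is the identity; given `σ_k`, the new table `k+1` is placed at the right-most
position (i.e. `σ_{k+1}(k+1) = k+1`, here expressed 0-indexed as
`π (Fin.last k) = Fin.last k`) with probability `θ/(kα+θ)`, and at each of the other
`k` positions with probability `α/(kα+θ)`; the positions of the old tables are shifted
accordingly: `σ_{k+1}(j) = σ_k(j) + 1{σ_{k+1}(k+1) ≤ σ_k(j)}`. -/
noncomputable def tableOrderLaw (α θ : ℝ) : (k : ℕ) → Equiv.Perm (Fin k) → ℝ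
  | 0, _ => 1
  | k + 1, π =>
      ∑ σ : Equiv.Perm (Fin k),
        tableOrderLaw α θ k σ *
          (if ∀ j : Fin k, (π j.castSucc : ℕ)
              = (σ j : ℕ) + (if (π (Fin.last k) : ℕ) ≤ (σ j : ℕ) then 1 else 0) then
            (if π (Fin.last k) = Fin.last k then θ / (k * α + θ) else α / (k * α + θ))
          else 0)

lemma risingFactorial_pos {x : ℝ} (hx : 0 < x) : ∀ n, 0 < risingFactorial x n
  | 0 => by simp [risingFactorial]
  | n + 1 => by
      rw [risingFactorial]
      exact mul_pos (risingFactorial_pos hx n) (by positivity)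

lemma succAbove_val {k : ℕ} (t : Fin (k+1)) (s : Fin k) :
    ((t.succAbove s : Fin (k+1)) : ℕ) = (s : ℕ) + (if (t : ℕ) ≤ (s : ℕ) then 1 else 0) := by
  rw [Fin.succAbove]
  split_ifs with h1 h2 h2 <;>
    simp_all [Fin.lt_iff_val_lt_val, Fin.le_iff_val_le_val] <;> omega

lemma cond_iff {k : ℕ} (π : Equiv.Perm (Fin (k+1))) (σ : Equiv.Perm (Fin k)) :
    (∀ j : Fin k, (π j.castSucc : ℕ)
        = (σ j : ℕ) + (if (π (Fin.last k) : ℕ) ≤ (σ j : ℕ) then 1 else 0)) ↔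
      (∀ j : Fin k, π j.castSucc = (π (Fin.last k)).succAbove (σ j)) := by
  constructor <;> intro h j
  · exact Fin.val_injective ((h j).trans (succAbove_val _ _).symm)
  · rw [h j, succAbove_val]

lemma exists_perm {k : ℕ} (π : Equiv.Perm (Fin (k+1))) :
    ∃ σ : Equiv.Perm (Fin k), ∀ j, π j.castSucc = (π (Fin.last k)).succAbove (σ j) := by
  have hne : ∀ j : Fin k, π j.castSucc ≠ π (Fin.last k) := fun j h =>
    (Fin.castSucc_lt_last j).ne (π.injective h)
  choose f hf using fun j => Fin.exists_succAbove_eq (hne j)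
  have hinj : Function.Injective f := by
    intro a b hab
    have : π a.castSucc = π b.castSucc := by rw [← hf a, ← hf b, hab]
    exact Fin.castSucc_injective k (π.injective this)
  exact ⟨Equiv.ofBijective f ((Fintype.bijective_iff_injective_and_card f).2 ⟨hinj, rfl⟩),
    fun j => (hf j).symm⟩

lemma numRecords_succ {k : ℕ} (π : Equiv.Perm (Fin (k+1))) (σ : Equiv.Perm (Fin k))
    (h : ∀ j, π j.castSucc = (π (Fin.last k)).succAbove (σ j)) :
    numRecords π = numRecords σ + (if π (Fin.last k) = Fin.last k then 1 else 0) := by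
  have key : ∀ j : Fin k,
      (∀ i, i < j.castSucc → π i < π j.castSucc) ↔ (∀ i, i < j → σ i < σ j) := by
    intro j
    constructor
    · intro H i hij
      have := H i.castSucc (Fin.castSucc_lt_castSucc_iff.mpr hij)
      rw [h i, h j] at this
      exact Fin.succAbove_lt_succAbove_iff.mp this
    · intro H i hij
      have hi : i ≠ Fin.last k := fun he => absurd (he ▸ hij) (not_lt.mpr (Fin.le_last _))
      rw [← Fin.castSucc_castPred i hi] at hij ⊢
      rw [h _, h j]
      exact Fin.succAbove_lt_succAbove_iff.mpr (H _ (Fin.castSucc_lt_castSucc_iff.mp hij))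
  have last_iff : (∀ i, i < Fin.last k → π i < π (Fin.last k)) ↔ π (Fin.last k) = Fin.last k := by
    constructor
    · intro H
      by_contra hne
      obtain ⟨x, hx⟩ := π.surjective (Fin.last k)
      have hxne : x ≠ Fin.last k := fun he => hne (he ▸ hx)
      have := H x (lt_of_le_of_ne (Fin.le_last x) hxne)
      rw [hx] at this
      exact absurd this (not_lt.mpr (Fin.le_last _))
    · intro H i hi
      have : π i ≠ Fin.last k := fun he =>
        (Fin.lt_last_iff_ne_last.mp hi) (π.injective (he.trans H.symm))
      rw [H]
      exact lt_of_le_of_ne (Fin.le_last _) this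
  unfold numRecords
  rw [Finset.card_filter, Finset.card_filter, Fin.sum_univ_castSucc]
  congr 1
  · exact Finset.sum_congr rfl fun j _ => by simp [key j]
  · simp [last_iff]

lemma tableOrderLaw_eq_aux (α θ : ℝ) (hα0 : 0 < α) (hθ : 0 < θ) :
    ∀ (k : ℕ) (π : Equiv.Perm (Fin k)),
      tableOrderLaw α θ k π = (θ / α) ^ numRecords π / risingFactorial (θ / α) k := by
  intro k
  induction k with
  | zero =>
      intro π
      simp [tableOrderLaw, numRecords, risingFactorial]
  | succ k ih =>
      intro π
      obtain ⟨σ₀, hσ₀⟩ := exists_perm π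
      have huniq : ∀ σ : Equiv.Perm (Fin k),
          (∀ j, π j.castSucc = (π (Fin.last k)).succAbove (σ j)) → σ = σ₀ := by
        intro σ hσ
        ext j
        have : (π (Fin.last k)).succAbove (σ j) = (π (Fin.last k)).succAbove (σ₀ j) :=
          (hσ j).symm.trans (hσ₀ j)
        exact congrArg Fin.val ((Fin.succAbove_right_injective) this)
      rw [tableOrderLaw]
      rw [Finset.sum_eq_single σ₀]
      · rw [if_pos ((cond_iff π σ₀).mpr hσ₀), ih σ₀,
          numRecords_succ π σ₀ hσ₀, risingFactorial]
        have hα : α ≠ 0 := ne_of_gt hα0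
        have hden : (k : ℝ) * α + θ ≠ 0 := by positivity
        have hrf : risingFactorial (θ/α) k ≠ 0 :=
          ne_of_gt (risingFactorial_pos (by positivity) k)
        split_ifs with hlast
        · rw [pow_succ]
          field_simp
          ring
        · rw [add_zero]
          field_simp
          ring
      · intro σ _ hne
        rw [if_neg, mul_zero]
        intro hcond
        exact hne (huniq σ ((cond_iff π σ).mp hcond))
      · intro habs
        exact absurd (Finset.mem_univ σ₀) habs

/-- `P(σ_k = π) = (θ/α)^{R(π)} / [θ/α]_k`. -/
theorem tableOrderLaw_eq (α θ : ℝ) (hα0 : 0 < α) (hα1 : α < 1) (hθ : 0 < θ)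
    (k : ℕ) (hk : 1 ≤ k) (π : Equiv.Perm (Fin k)) :
    tableOrderLaw α θ k π = (θ / α) ^ numRecords π / risingFactorial (θ / α) k :=
  tableOrderLaw_eq_aux α θ hα0 hθ k π
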